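/- Let n, d, q, r, m be natural numbers with n ≥ 1, q ≥ 1, q ≥ 2·d·n, and r ≥ m + 1 + n · (Nat.size q). Let 𝒞 be a finite set of polynomials in MvPolynomial (Fin n) ℤ with |𝒞| ≤ 2^m, each with degreeOf i P ≤ d for all i. Then there exists an r-tuple H = (h_1,…,h_r) of points of the grid S_q^n that is a hitting set for 𝒞 over S_q: for every P ∈ 𝒞, if eval a P ≠ 0 for some a : Fin n → ℤ, then eval (h_i) P ≠ 0 for some i ∈ [r]. -/

import Mathlib

open MvPolynomial Finset


lemma sz_grid (d q : ℕ) : ∀ (n : ℕ) (P : MvPolynomial (Fin n) ℤ), P ≠ 0 →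
    (∀ i, degreeOf i P ≤ d) →
    ((Fintype.piFinset fun _ : Fin n => Finset.Ico (0:ℤ) (q:ℤ)).filter
      fun x => eval x P = 0).card ≤ n * d * q ^ (n-1) := by
  intro n
  induction n with
  | zero =>
      intro P hP hdeg
      have : ∀ x : Fin 0 → ℤ, eval x P ≠ 0 := by
        intro x
        rw [eq_C_of_isEmpty P, eval_C]
        intro h
        apply hP
        rw [eq_C_of_isEmpty P, h, map_zero]
      simp [Finset.filter_eq_empty_iff.2 fun x _ => this x]
  | succ n IH =>
      intro P hP hdeg
      classical
      set Q := finSuccEquiv ℤ n P with hQ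
      have hQ0 : Q ≠ 0 := by
        simpa [hQ] using (EmbeddingLike.map_ne_zero_iff (f := finSuccEquiv ℤ n)).2 hP
      set L := Q.leadingCoeff with hL
      have hL0 : L ≠ 0 := Polynomial.leadingCoeff_ne_zero.2 hQ0
      have hLdeg : ∀ j : Fin n, degreeOf j L ≤ d := fun j =>
        le_trans (degreeOf_coeff_finSuccEquiv P j Q.natDegree) (hdeg j.succ)
      set G : Finset (Fin n → ℤ) := Fintype.piFinset fun _ : Fin n => Finset.Ico (0:ℤ) (q:ℤ)
        with hG
      set I : Finset ℤ := Finset.Ico (0:ℤ) (q:ℤ) with hI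
      have hIcard : I.card = q := by simp [hI]
      have hGcard : G.card = q ^ n := by simp [hG, hIcard]
      -- the injection
      have hinj : Function.Injective (fun p : ℤ × (Fin n → ℤ) => Fin.cons p.1 p.2 :
          ℤ × (Fin n → ℤ) → Fin (n+1) → ℤ) := by
        intro p p' h
        have h0 := congrFun h 0
        have h1 : p.2 = p'.2 := funext fun j => congrFun h j.succ
        simp only [Fin.cons_zero] at h0
        exact Prod.ext h0 h1
      have himg : ((Fintype.piFinset fun _ : Fin (n+1) => Finset.Ico (0:ℤ) (q:ℤ)).filter
            fun x => eval x P = 0) =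
          ((I ×ˢ G).filter fun p => eval (Fin.cons p.1 p.2) P = 0).image
            (fun p => Fin.cons p.1 p.2) := by
        ext x
        simp only [Finset.mem_filter, Fintype.mem_piFinset, Finset.mem_image, Finset.mem_product,
          hG, hI]
        constructor
        · rintro ⟨hx, hx0⟩
          refine ⟨(x 0, Fin.tail x), ⟨⟨hx 0, fun j => hx j.succ⟩, ?_⟩, Fin.cons_self_tail x⟩
          rw [Fin.cons_self_tail]; exact hx0
        · rintro ⟨p, ⟨⟨h1, h2⟩, h3⟩, rfl⟩
          refine ⟨?_, h3⟩
          intro i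
          refine Fin.cases ?_ ?_ i
          · simpa using h1
          · intro j; simpa using h2 j
      rw [himg, Finset.card_image_of_injective _ hinj]
      -- split the filter
      have hsplit : ((I ×ˢ G).filter fun p => eval (Fin.cons p.1 p.2) P = 0) ⊆
          ((I ×ˢ G).filter fun p => eval p.2 L = 0) ∪
          ((I ×ˢ G).filter fun p => eval p.2 L ≠ 0 ∧ eval (Fin.cons p.1 p.2) P = 0) := by
        intro p hp
        rw [Finset.mem_filter] at hp
        rw [Finset.mem_union, Finset.mem_filter, Finset.mem_filter]
        by_cases h : eval p.2 L = 0
        · exact Or.inl ⟨hp.1, h⟩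
        · exact Or.inr ⟨hp.1, h, hp.2⟩
      refine le_trans (Finset.card_le_card hsplit) (le_trans (Finset.card_union_le _ _) ?_)
      have b1 : ((I ×ˢ G).filter fun p => eval p.2 L = 0).card ≤ n * d * q ^ n := by
        have : ((I ×ˢ G).filter fun p : ℤ × (Fin n → ℤ) => eval p.2 L = 0) =
            I ×ˢ (G.filter fun s => eval s L = 0) := by
          ext p
          simp only [Finset.mem_filter, Finset.mem_product]
          tauto
        rw [this, Finset.card_product, hIcard]
        calc q * (G.filter fun s => eval s L = 0).card ≤ q * (n * d * q ^ (n-1)) :=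
              Nat.mul_le_mul_left q (IH L hL0 hLdeg)
          _ ≤ n * d * q ^ n := by
              cases n with
              | zero => simp
              | succ k =>
                  simp only [Nat.succ_sub_one]
                  rw [pow_succ]
                  ring_nf
                  exact le_refl _
      have b2 : ((I ×ˢ G).filter fun p => eval p.2 L ≠ 0 ∧ eval (Fin.cons p.1 p.2) P = 0).card
          ≤ d * q ^ n := by
        set T := (I ×ˢ G).filter fun p : ℤ × (Fin n → ℤ) =>
          eval p.2 L ≠ 0 ∧ eval (Fin.cons p.1 p.2) P = 0 with hT
        have hfib : ∀ p ∈ T, p.2 ∈ G := by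
          intro p hp
          rw [hT, Finset.mem_filter, Finset.mem_product] at hp
          exact hp.1.2
        rw [Finset.card_eq_sum_card_fiberwise hfib]
        have hb : ∀ s ∈ G, (T.filter fun p => p.2 = s).card ≤ d := by
          intro s _
          by_cases hs : eval s L = 0
          · have : (T.filter fun p => p.2 = s) = ∅ := by
              rw [Finset.filter_eq_empty_iff]
              rintro p hp rfl
              rw [hT, Finset.mem_filter] at hp
              exact hp.2.1 hs
            simp [this]
          · set g : Polynomial ℤ := Q.map (eval s) with hg
            have hlc : g.leadingCoeff = eval s L :=
              Polynomial.leadingCoeff_map_of_leadingCoeff_ne_zero _ hs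
            have hg0 : g ≠ 0 := fun h => hs (by rw [← hlc, h, Polynomial.leadingCoeff_zero])
            have hgdeg : g.natDegree ≤ d := by
              rw [hg, Polynomial.natDegree_map_of_leadingCoeff_ne_zero _ hs,
                hQ, natDegree_finSuccEquiv]
              exact hdeg 0
            have : (T.filter fun p => p.2 = s).card ≤ g.roots.toFinset.card := by
              apply Finset.card_le_card_of_injOn (fun p => p.1)
              · intro p hp
                rw [Finset.mem_coe, Finset.mem_filter] at hp
                obtain ⟨hpT, rfl⟩ := hp
                rw [hT, Finset.mem_filter] at hpT
                rw [Finset.mem_coe, Multiset.mem_toFinset, Polynomial.mem_roots hg0]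
                have := hpT.2.2
                rw [eval_eq_eval_mv_eval'] at this
                exact this
              · intro p hp p' hp' h
                rw [Finset.mem_coe, Finset.mem_filter] at hp hp'
                exact Prod.ext h (hp.2.trans hp'.2.symm)
            calc (T.filter fun p => p.2 = s).card ≤ g.roots.toFinset.card := this
              _ ≤ Multiset.card g.roots := g.roots.toFinset_card_le
              _ ≤ g.natDegree := Polynomial.card_roots' g
              _ ≤ d := hgdeg
        calc ∑ s ∈ G, (T.filter fun p => p.2 = s).card ≤ ∑ s ∈ G, d := Finset.sum_le_sum hb
          _ = q ^ n * d := by rw [Finset.sum_const, smul_eq_mul, hGcard]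
          _ = d * q ^ n := mul_comm _ _
      calc _ ≤ n * d * q ^ n + d * q ^ n := Nat.add_le_add b1 b2
        _ = (n+1) * d * q ^ ((n+1)-1) := by simp only [Nat.succ_sub_one]; ring



lemma greedy_step {α β : Type*} [DecidableEq α] [DecidableEq β] (G : Finset α) (hG : G.Nonempty)
    (𝒟 : Finset β) (A : β → Finset α)
    (hA : ∀ P ∈ 𝒟, A P ⊆ G ∧ G.card ≤ 2 * (A P).card) :
    ∃ x ∈ G, 2 * (𝒟.filter fun P => x ∉ A P).card ≤ 𝒟.card := by
  classical
  have hsum : ∑ x ∈ G, 𝒟.card ≤ ∑ x ∈ G, 2 * (𝒟.filter fun P => x ∈ A P).card := by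
    have e1 : ∑ x ∈ G, (𝒟.filter fun P => x ∈ A P).card = ∑ P ∈ 𝒟, (A P).card := by
      simp_rw [Finset.card_filter]
      rw [Finset.sum_comm]
      refine Finset.sum_congr rfl fun P hP => ?_
      rw [← Finset.card_filter, Finset.filter_mem_eq_inter,
        Finset.inter_eq_right.2 (hA P hP).1]
    rw [← Finset.mul_sum, e1, Finset.sum_const, smul_eq_mul, Finset.mul_sum]
    calc G.card * 𝒟.card = ∑ P ∈ 𝒟, G.card := by rw [Finset.sum_const, smul_eq_mul, mul_comm]
      _ ≤ ∑ P ∈ 𝒟, 2 * (A P).card := Finset.sum_le_sum fun P hP => (hA P hP).2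
  obtain ⟨x, hx, hx2⟩ := Finset.exists_le_of_sum_le hG hsum
  refine ⟨x, hx, ?_⟩
  have h3 := Finset.card_filter_add_card_filter_not (s := 𝒟)
    (p := fun P => x ∈ A P)
  omega

lemma greedy_cover {α β : Type*} [DecidableEq α] [DecidableEq β] (G : Finset α)
    (hG : G.Nonempty) :
    ∀ (m : ℕ) (𝒟 : Finset β) (A : β → Finset α), 𝒟.card ≤ 2 ^ m →
      (∀ P ∈ 𝒟, A P ⊆ G ∧ G.card ≤ 2 * (A P).card) →
      ∃ L : Fin (m+1) → α, (∀ i, L i ∈ G) ∧ ∀ P ∈ 𝒟, ∃ i, L i ∈ A P := by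
  intro m
  induction m with
  | zero =>
      intro 𝒟 A hc hA
      obtain ⟨x, hx, hx2⟩ := greedy_step G hG 𝒟 A hA
      refine ⟨fun _ => x, fun _ => hx, fun P hP => ⟨0, ?_⟩⟩
      by_contra hxa
      have : P ∈ 𝒟.filter fun P => x ∉ A P := Finset.mem_filter.2 ⟨hP, hxa⟩
      have := Finset.card_pos.2 ⟨P, this⟩
      omega
  | succ m IH =>
      intro 𝒟 A hc hA
      obtain ⟨x, hx, hx2⟩ := greedy_step G hG 𝒟 A hA
      set 𝒟' := 𝒟.filter fun P => x ∉ A P with h𝒟'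
      have hc' : 𝒟'.card ≤ 2 ^ m := by
        have : (2:ℕ) ^ (m+1) = 2 * 2 ^ m := by ring
        omega
      obtain ⟨L', hL'G, hL'⟩ := IH 𝒟' A hc'
        (fun P hP => hA P (Finset.mem_filter.1 hP).1)
      refine ⟨Fin.cons x L', ?_, ?_⟩
      · intro i
        refine Fin.cases ?_ ?_ i
        · simpa using hx
        · intro j; simpa using hL'G j
      · intro P hP
        by_cases hxa : x ∈ A P
        · exact ⟨0, by simpa using hxa⟩
        · obtain ⟨i, hi⟩ := hL' P (Finset.mem_filter.2 ⟨hP, hxa⟩)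
          exact ⟨i.succ, by simpa using hi⟩


theorem hitting_set_exists (n d q r m : ℕ) (hn : 1 ≤ n) (hq : 1 ≤ q)
    (hq2 : 2 * d * n ≤ q) (hr : m + 1 + n * Nat.size q ≤ r)
    (𝒞 : Finset (MvPolynomial (Fin n) ℤ)) (hcard : 𝒞.card ≤ 2 ^ m)
    (hdeg : ∀ P ∈ 𝒞, ∀ i : Fin n, MvPolynomial.degreeOf i P ≤ d) :
    ∃ H : Fin r → Fin n → ℤ,
      (∀ i j, 0 ≤ H i j ∧ H i j < (q : ℤ)) ∧
      ∀ P ∈ 𝒞, (∃ a : Fin n → ℤ, eval a P ≠ 0) → ∃ i, eval (H i) P ≠ 0 := by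
  classical
  set G : Finset (Fin n → ℤ) := Fintype.piFinset fun _ : Fin n => Finset.Ico (0:ℤ) (q:ℤ)
    with hGdef
  have hGcard : G.card = q ^ n := by simp [hGdef]
  have hG : G.Nonempty := by
    rw [← Finset.card_pos, hGcard]
    exact pow_pos (by omega : 0 < q) n |>.trans_eq rfl
  set 𝒟 : Finset (MvPolynomial (Fin n) ℤ) := 𝒞.filter (· ≠ 0) with h𝒟
  set A : MvPolynomial (Fin n) ℤ → Finset (Fin n → ℤ) :=
    fun P => G.filter fun x => eval x P ≠ 0 with hA
  have hAcond : ∀ P ∈ 𝒟, A P ⊆ G ∧ G.card ≤ 2 * (A P).card := by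
    intro P hP
    rw [h𝒟, Finset.mem_filter] at hP
    refine ⟨Finset.filter_subset _ _, ?_⟩
    have hz := sz_grid d q n P hP.2 (hdeg P hP.1)
    have hsum := Finset.card_filter_add_card_filter_not (s := G)
      (p := fun x => eval x P = 0)
    have hAcard : (A P).card = (G.filter fun x => ¬ eval x P = 0).card := rfl
    have hz' : (G.filter fun x => eval x P = 0).card ≤ n * d * q ^ (n-1) := hz
    have hb : 2 * (n * d * q ^ (n-1)) ≤ q ^ n := by
      calc 2 * (n * d * q ^ (n-1)) = (2 * d * n) * q ^ (n-1) := by ring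
        _ ≤ q * q ^ (n-1) := Nat.mul_le_mul_right _ hq2
        _ = q ^ n := by
            rw [← pow_succ']
            congr 1
            omega
    omega
  have hc : 𝒟.card ≤ 2 ^ m := le_trans (Finset.card_le_card (Finset.filter_subset _ _)) hcard
  obtain ⟨L, hLG, hL⟩ := greedy_cover G hG m 𝒟 A hc hAcond
  have hmr : m + 1 ≤ r := by omega
  refine ⟨fun i => if h : (i : ℕ) < m + 1 then L ⟨i, h⟩ else L 0, ?_, ?_⟩
  · intro i j
    have hmem : ∀ k : Fin (m+1), ∀ j, 0 ≤ L k j ∧ L k j < (q:ℤ) := by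
      intro k j
      have := hLG k
      rw [hGdef, Fintype.mem_piFinset] at this
      have := this j
      rw [Finset.mem_Ico] at this
      exact this
    by_cases h : (i : ℕ) < m + 1
    · simpa [h] using hmem ⟨i, h⟩ j
    · simpa [h] using hmem 0 j
  · intro P hP ⟨a, ha⟩
    have hP0 : P ≠ 0 := fun h => ha (by rw [h, map_zero])
    obtain ⟨i, hi⟩ := hL P (Finset.mem_filter.2 ⟨hP, hP0⟩)
    refine ⟨⟨i, lt_of_lt_of_le i.2 hmr⟩, ?_⟩
    have hlt : ((⟨(i:ℕ), lt_of_lt_of_le i.2 hmr⟩ : Fin r) : ℕ) < m + 1 := i.2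
    rw [hA, Finset.mem_filter] at hi
    simpa [hlt] using hi.2
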